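/- Let T be a decorated rooted tree with root v_0 such that f(α) ∈ {0,1} for every arrow α. For every out-pair (x,e) (i.e., e = {x,x'} is an edge with x < x' in the root order), one has p(x,e) = 1 + Σ_{y ∈ Y(x,e)} φ(x,y)·(δ_y - 2), where Y(x,e) = {y ∈ V ∪ A_0 : e lies on the path from x to y}, and φ(x,y) is the product of q(ε,u) over all pairs (ε,u) with u a cell of the path γ_{x,y} other than x, ε an edge incident to u not lying on the path. -/

import Mathlib

open Finset
open scoped Classical

/-- A decorated tree: a finite tree on cells `C = V ∪ A`, where `isArrow`
distinguishes arrows (of valency 1) from vertices.  `f a` is the decoration of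
the arrow `a`, and `q x y` is the decoration of the edge `{x,y}` near `x`.
Decorations at arrows are `1`; decorations near a vertex are pairwise coprime. -/
structure DecTree where
  C : Type
  [fintypeC : Fintype C]
  [decEqC : DecidableEq C]
  G : SimpleGraph C
  [decAdj : DecidableRel G.Adj]
  isTree : G.IsTree
  isArrow : C → Prop
  [decArrow : DecidablePred isArrow]
  arrowValency : ∀ a, isArrow a → G.degree a = 1
  f : C → ℤ
  q : C → C → ℤ
  q_arrow : ∀ a x, isArrow a → G.Adj a x → q a x = 1
  q_coprime : ∀ v x y, ¬ isArrow v → G.Adj v x → G.Adj v y → x ≠ y →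
    IsCoprime (q v x) (q v y)

attribute [instance] DecTree.fintypeC DecTree.decEqC DecTree.decAdj DecTree.decArrow

namespace DecTree

variable (T : DecTree)

/-- The unique path between two cells of the tree. -/
noncomputable def path (x y : T.C) : T.G.Walk x y :=
  (T.isTree.existsUnique_path x y).exists.choose

/-- `xva T v a` is the quantity `x_{v,a}`: the decoration `f a` times the
product of the decorations `q(ε,u)` over all edges `ε = {u,w}` incident to the
path from `v` to `a` (i.e. `u` on the path, `w` off the path). -/
noncomputable def xva (v a : T.C) : ℤ :=
  T.f a * ∏ uw ∈ Finset.univ.filter (fun uw : T.C × T.C =>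
      uw.1 ∈ (T.path v a).support ∧ T.G.Adj uw.1 uw.2 ∧
        uw.2 ∉ (T.path v a).support),
    T.q uw.1 uw.2

/-- `xhat T v a` is `x̂_{v,a}`: as `x_{v,a}` but omitting edges incident to `v`. -/
noncomputable def xhat (v a : T.C) : ℤ :=
  T.f a * ∏ uw ∈ Finset.univ.filter (fun uw : T.C × T.C =>
      uw.1 ∈ (T.path v a).support ∧ uw.1 ≠ v ∧ T.G.Adj uw.1 uw.2 ∧
        uw.2 ∉ (T.path v a).support),
    T.q uw.1 uw.2

/-- The multiplicity `N_v = Σ_{α ∈ A∖A₀} x_{v,α}`. -/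
noncomputable def N (v : T.C) : ℤ :=
  ∑ a ∈ Finset.univ.filter (fun a => T.isArrow a ∧ T.f a ≠ 0), T.xva v a

/-- The multiplicity of the tree, `M(T) = -Σ_{v ∈ V∪A₀} N_v (δ_v - 2)`. -/
noncomputable def M : ℤ :=
  - ∑ v ∈ Finset.univ.filter (fun v => ¬ T.isArrow v ∨ T.f v = 0),
      T.N v * ((T.G.degree v : ℤ) - 2)

/-- `p(α, e_α) = Σ_{β ∈ (A∖A₀)∖{α}} x̂_{α,β}` for an arrow `α`. -/
noncomputable def parrow (a : T.C) : ℤ :=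
  ∑ b ∈ Finset.univ.filter (fun b => T.isArrow b ∧ T.f b ≠ 0 ∧ b ≠ a), T.xhat a b

/-- `F(T) = Σ_{α ∈ A∖A₀} gcd(f(α), p(α, e_α))`. -/
noncomputable def F : ℤ :=
  ∑ a ∈ Finset.univ.filter (fun a => T.isArrow a ∧ T.f a ≠ 0),
    (Int.gcd (T.f a) (T.parrow a) : ℤ)

/-- `Q(e,x)` for `e = {x,y}`: product of the decorations near `x` of the
other edges incident to `x`. -/
noncomputable def Qe (x y : T.C) : ℤ :=
  ∏ w ∈ (T.G.neighborFinset x).erase y, T.q x w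

/-- `lt T v0 x y` means `x < y` in the order rooted at `v0`:
`x ≠ y` and `x` lies on the path from `v0` to `y`. -/
def lt (v0 x y : T.C) : Prop :=
  x ≠ y ∧ x ∈ (T.path v0 y).support

/-- `v0` is a root: a vertex all of whose edge decorations are `1`, such that
for every other vertex `v`, all edges at `v` not on the path `γ_{v0,v}` have
decoration `≥ 1` near `v`, at most one of them being `> 1`. -/
def IsRoot (v0 : T.C) : Prop :=
  ¬ T.isArrow v0 ∧
  (∀ x, T.G.Adj v0 x → T.q v0 x = 1) ∧
  ∀ v, ¬ T.isArrow v → v ≠ v0 →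
    (∀ x, T.G.Adj v x → s(v, x) ∉ (T.path v0 v).edges → 1 ≤ T.q v x) ∧
    (∀ x y, T.G.Adj v x → T.G.Adj v y →
      s(v, x) ∉ (T.path v0 v).edges → s(v, y) ∉ (T.path v0 v).edges →
      1 < T.q v x → 1 < T.q v y → x = y)

/-- The tree has negative determinants: `det(e) < 0` for every edge `e`
joining two vertices. -/
def HasNegDet : Prop :=
  ∀ x y, ¬ T.isArrow x → ¬ T.isArrow y → T.G.Adj x y →
    T.q x y * T.q y x - T.Qe x y * T.Qe y x < 0

/-- A subset `S` of the cells is connected if every path whose endpoints lie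
in `S` lies entirely in `S`. -/
def ConnectedSet (S : Set T.C) : Prop :=
  ∀ x y, x ∈ S → y ∈ S → ∀ u, u ∈ (T.path x y).support → u ∈ S

/-- `φ(x,y)`: product of `q(ε,u)` over cells `u ≠ x` of the path from `x` to
`y` and edges `ε` incident to `u` not lying on the path. -/
noncomputable def phi (x y : T.C) : ℤ :=
  ∏ uw ∈ Finset.univ.filter (fun uw : T.C × T.C =>
      uw.1 ∈ (T.path x y).support ∧ uw.1 ≠ x ∧ T.G.Adj uw.1 uw.2 ∧
        uw.2 ∉ (T.path x y).support),
    T.q uw.1 uw.2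

end DecTree

namespace DecTree

open SimpleGraph Walk

variable (T : DecTree)

lemma path_isPath (x y : T.C) : (T.path x y).IsPath :=
  (T.isTree.existsUnique_path x y).exists.choose_spec

lemma path_unique {x y : T.C} (p : T.G.Walk x y) (hp : p.IsPath) : p = T.path x y :=
  (T.isTree.existsUnique_path x y).unique hp (T.path_isPath x y)

lemma path_nil (x : T.C) : T.path x x = SimpleGraph.Walk.nil :=
  (T.path_unique _ (SimpleGraph.Walk.IsPath.nil)).symm

lemma path_single {x y : T.C} (h : T.G.Adj x y) :
    T.path x y = SimpleGraph.Walk.cons h SimpleGraph.Walk.nil := by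
  refine (T.path_unique _ ?_).symm
  rw [SimpleGraph.Walk.cons_isPath_iff]
  simp [h.ne]

lemma path_cons {x x' y : T.C} (h : T.G.Adj x x') (hx' : x' ∈ (T.path x y).support) :
    T.path x y = SimpleGraph.Walk.cons h (T.path x' y) := by
  have hp := T.path_isPath x y
  have h1 : (T.path x y).takeUntil x' hx' = SimpleGraph.Walk.cons h SimpleGraph.Walk.nil := by
    rw [← T.path_single h]
    exact T.path_unique _ (hp.takeUntil hx')
  have h2 : (T.path x y).dropUntil x' hx' = T.path x' y :=
    T.path_unique _ (hp.dropUntil hx')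
  conv_lhs => rw [← (T.path x y).take_spec hx']
  rw [h1, h2]
  rfl

lemma not_mem_support_path_cons {x x' y : T.C} (h : T.G.Adj x x')
    (hx' : x' ∈ (T.path x y).support) : x ∉ (T.path x' y).support := by
  have hp := T.path_isPath x y
  rw [T.path_cons h hx'] at hp
  exact ((SimpleGraph.Walk.cons_isPath_iff _ _).1 hp).2

lemma adj_support_unique {x x' y u : T.C} (h : T.G.Adj x x')
    (hx' : x' ∈ (T.path x y).support) (hu : T.G.Adj x u)
    (hus : u ∈ (T.path x y).support) (hux : u ≠ x) : u = x' := by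
  have hxs : x ∉ (T.path x' y).support := T.not_mem_support_path_cons h hx'
  have hus' : u ∈ (T.path x' y).support := by
    rw [T.path_cons h hx', SimpleGraph.Walk.support_cons, List.mem_cons] at hus
    rcases hus with hus | hus
    · exact absurd hus hux
    · exact hus
  have htp : ((T.path x' y).takeUntil u hus').IsPath := (T.path_isPath x' y).takeUntil hus'
  have hxt : x ∉ ((T.path x' y).takeUntil u hus').support :=
    fun hh => hxs ((T.path x' y).support_takeUntil_subset hus' hh)
  have hq : SimpleGraph.Walk.cons h ((T.path x' y).takeUntil u hus') = T.path x u :=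
    T.path_unique _ ((SimpleGraph.Walk.cons_isPath_iff _ _).2 ⟨htp, hxt⟩)
  have h1 : T.path x u = SimpleGraph.Walk.cons hu SimpleGraph.Walk.nil := T.path_single hu
  have hlen : ((T.path x' y).takeUntil u hus').length = 0 := by
    have := congrArg SimpleGraph.Walk.length (hq.trans h1)
    simpa using this
  exact (SimpleGraph.Walk.eq_of_length_eq_zero hlen).symm

lemma path_reverse (x y : T.C) : (T.path x y).reverse = T.path y x :=
  T.path_unique _ ((SimpleGraph.Walk.isPath_reverse_iff _).2 (T.path_isPath x y))

lemma mem_support_path_trans {x x' w y : T.C} (h : T.G.Adj x x') (hw : T.G.Adj x' w)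
    (hwx : w ≠ x) (hwy : w ∈ (T.path x' y).support) : x' ∈ (T.path x y).support := by
  by_contra hc
  have hp : (SimpleGraph.Walk.cons h.symm (T.path x y)).IsPath :=
    (SimpleGraph.Walk.cons_isPath_iff _ _).2 ⟨T.path_isPath x y, hc⟩
  have he : T.path x' y = SimpleGraph.Walk.cons h.symm (T.path x y) :=
    (T.path_unique _ hp).symm
  have hx : x ∈ (T.path x' y).support := by
    rw [he, SimpleGraph.Walk.support_cons]
    exact List.mem_cons_of_mem _ (T.path x y).start_mem_support
  exact hwx (T.adj_support_unique h.symm hx hw hwy hw.ne')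

/-- The branch of cells beyond the oriented edge `(x,x')`. -/
noncomputable def Br (x x' : T.C) : Finset T.C :=
  Finset.univ.filter (fun y => x' ∈ (T.path x y).support)

lemma mem_Br {x x' y : T.C} : y ∈ T.Br x x' ↔ x' ∈ (T.path x y).support := by
  simp [Br]

lemma self_mem_Br (x x' : T.C) : x' ∈ T.Br x x' :=
  T.mem_Br.2 (T.path x x').end_mem_support

lemma not_mem_Br {x x' : T.C} (h : T.G.Adj x x') : x ∉ T.Br x x' := by
  rw [mem_Br, T.path_nil, SimpleGraph.Walk.support_nil]
  simpa using h.ne'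

lemma Br_erase_eq {x x' : T.C} (h : T.G.Adj x x') :
    (T.Br x x').erase x' =
      ((T.G.neighborFinset x').erase x).biUnion (fun w => T.Br x' w) := by
  ext y
  simp only [Finset.mem_erase, Finset.mem_biUnion, SimpleGraph.mem_neighborFinset, mem_Br]
  constructor
  · rintro ⟨hyx', hx'⟩
    obtain ⟨w, hw, p', hp'⟩ := SimpleGraph.Walk.exists_eq_cons_of_ne (Ne.symm hyx') (T.path x' y)
    have hppath := T.path_isPath x' y
    rw [hp'] at hppath
    have hp'path := ((SimpleGraph.Walk.cons_isPath_iff _ _).1 hppath).1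
    have hwsupp : w ∈ (T.path x' y).support := by
      rw [hp', SimpleGraph.Walk.support_cons]
      exact List.mem_cons_of_mem _ p'.start_mem_support
    have hxs : x ∉ (T.path x' y).support := T.not_mem_support_path_cons h hx'
    refine ⟨w, ⟨fun hwx => hxs (hwx ▸ hwsupp), hw⟩, hwsupp⟩
  · rintro ⟨w, ⟨hwx, hw⟩, hwy⟩
    have hx' : x' ∈ (T.path x y).support := T.mem_support_path_trans h hw hwx hwy
    refine ⟨fun hyx' => ?_, hx'⟩
    · subst hyx'
      rw [T.path_nil, SimpleGraph.Walk.support_nil] at hwy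
      simp at hwy
      exact hw.ne' hwy

lemma sum_Br {x x' : T.C} (h : T.G.Adj x x') (g : T.C → ℤ) :
    ∑ y ∈ T.Br x x', g y =
      g x' + ∑ w ∈ (T.G.neighborFinset x').erase x, ∑ y ∈ T.Br x' w, g y := by
  rw [← Finset.add_sum_erase _ g (T.self_mem_Br x x'), T.Br_erase_eq h]
  congr 1
  refine Finset.sum_biUnion ?_
  intro w hw w' hw' hne
  simp only [Finset.mem_coe, Finset.mem_erase, SimpleGraph.mem_neighborFinset] at hw hw'
  refine Finset.disjoint_left.2 fun y hy hy' => ?_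
  rw [mem_Br] at hy hy'
  exact hne (T.adj_support_unique hw.2 hy hw'.2 hy' hw'.2.ne').symm

lemma Br_subset {x x' w : T.C} (h : T.G.Adj x x') (hw : T.G.Adj x' w) (hwx : w ≠ x) :
    T.Br x' w ⊆ (T.Br x x').erase x' := by
  intro y hy
  rw [T.Br_erase_eq h]
  exact Finset.mem_biUnion.2 ⟨w, Finset.mem_erase.2 ⟨hwx, (SimpleGraph.mem_neighborFinset _ _ _).2 hw⟩, hy⟩

lemma phi_self {x x' : T.C} (h : T.G.Adj x x') :
    T.phi x x' = ∏ w ∈ (T.G.neighborFinset x').erase x, T.q x' w := by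
  rw [phi]
  have hset : (Finset.univ.filter (fun uw : T.C × T.C =>
      uw.1 ∈ (T.path x x').support ∧ uw.1 ≠ x ∧ T.G.Adj uw.1 uw.2 ∧
        uw.2 ∉ (T.path x x').support)) =
      ((T.G.neighborFinset x').erase x).image (fun v => (x', v)) := by
    ext ⟨u, v⟩
    simp only [Finset.mem_filter, Finset.mem_univ, true_and, Finset.mem_image,
      Finset.mem_erase, SimpleGraph.mem_neighborFinset, T.path_single h,
      SimpleGraph.Walk.support_cons, SimpleGraph.Walk.support_nil, List.mem_cons,
      List.mem_singleton, List.not_mem_nil, or_false, Prod.mk.injEq]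
    constructor
    · rintro ⟨hu, hux, hadj, hv⟩
      push_neg at hv
      rcases hu with hu | hu
      · exact absurd hu hux
      · subst hu
        exact ⟨v, ⟨hv.1, hadj⟩, rfl, rfl⟩
    · rintro ⟨w, ⟨hwx, hw⟩, rfl, rfl⟩
      push_neg
      exact ⟨Or.inr rfl, h.ne', hw, hwx, hw.ne'⟩
  rw [hset, Finset.prod_image]
  intro a _ b _ hab
  simpa using hab

lemma phi_cons {x x' w y : T.C} (h : T.G.Adj x x') (hw : T.G.Adj x' w) (hwx : w ≠ x)
    (hwy : w ∈ (T.path x' y).support) :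
    T.phi x y =
      (∏ v ∈ ((T.G.neighborFinset x').erase x).erase w, T.q x' v) * T.phi x' y := by
  have hx' : x' ∈ (T.path x y).support := T.mem_support_path_trans h hw hwx hwy
  have hxs : x ∉ (T.path x' y).support := T.not_mem_support_path_cons h hx'
  have hcons := T.path_cons h hx'
  -- the set for `phi x y`
  have hA : (Finset.univ.filter (fun uw : T.C × T.C =>
      uw.1 ∈ (T.path x y).support ∧ uw.1 ≠ x ∧ T.G.Adj uw.1 uw.2 ∧
        uw.2 ∉ (T.path x y).support)) =
      (Finset.univ.filter (fun uw : T.C × T.C =>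
        uw.1 ∈ (T.path x' y).support ∧ uw.1 ≠ x' ∧ T.G.Adj uw.1 uw.2 ∧
          uw.2 ∉ (T.path x' y).support)) ∪
      (((T.G.neighborFinset x').erase x).erase w).image (fun v => (x', v)) := by
    ext ⟨u, v⟩
    simp only [Finset.mem_filter, Finset.mem_univ, true_and, Finset.mem_union,
      Finset.mem_image, Finset.mem_erase, SimpleGraph.mem_neighborFinset, hcons,
      SimpleGraph.Walk.support_cons, List.mem_cons, Prod.mk.injEq]
    constructor
    · rintro ⟨hu, hux, hadj, hv⟩
      push_neg at hv
      have hu' : u ∈ (T.path x' y).support := by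
        rcases hu with hu | hu
        · exact absurd hu hux
        · exact hu
      by_cases huxeq : u = x'
      · subst huxeq
        refine Or.inr ⟨v, ⟨?_, hv.1, hadj⟩, rfl, rfl⟩
        intro hveq
        subst hveq
        exact hv.2 hwy
      · exact Or.inl ⟨hu', huxeq, hadj, hv.2⟩
    · rintro (⟨hu, hux', hadj, hv⟩ | ⟨v', ⟨hvw, hvx, hvadj⟩, rfl, rfl⟩)
      · have hvx : v ≠ x := by
          intro hveq
          subst hveq
          exact hux' (T.adj_support_unique h hx' hadj.symm
            (by rw [hcons, SimpleGraph.Walk.support_cons]; exact List.mem_cons_of_mem _ hu)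
            (fun hh => hxs (hh ▸ hu)))
        push_neg
        exact ⟨Or.inr hu, fun hh => hxs (hh ▸ hu), hadj, hvx, hv⟩
      · have hv' : v' ∉ (T.path x' y).support := by
          intro hmem
          exact hvw (T.adj_support_unique hw hwy hvadj hmem hvadj.ne')
        push_neg
        exact ⟨Or.inr (T.path x' y).start_mem_support, h.ne', hvadj, hvx, hv'⟩
  have hdisj : Disjoint (Finset.univ.filter (fun uw : T.C × T.C =>
        uw.1 ∈ (T.path x' y).support ∧ uw.1 ≠ x' ∧ T.G.Adj uw.1 uw.2 ∧
          uw.2 ∉ (T.path x' y).support))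
      ((((T.G.neighborFinset x').erase x).erase w).image (fun v => (x', v))) := by
    refine Finset.disjoint_left.2 ?_
    rintro ⟨u, v⟩ hmem hmem'
    simp only [Finset.mem_filter] at hmem
    simp only [Finset.mem_image, Prod.mk.injEq] at hmem'
    obtain ⟨v', _, rfl, rfl⟩ := hmem'
    exact hmem.2.2.1 rfl
  rw [phi, phi, hA, Finset.prod_union hdisj, mul_comm]
  congr 1
  rw [Finset.prod_image]
  intro a _ b _ hab
  simpa using hab

lemma arith {C : Type} [DecidableEq C] (s : Finset C) (g : C → ℤ)
    (h1 : ∀ v ∈ s, 1 ≤ g v)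
    (h2 : ∀ v ∈ s, ∀ w ∈ s, 1 < g v → 1 < g w → v = w) :
    ∑ w ∈ s, ∏ v ∈ s.erase w, g v = 1 + (∏ v ∈ s, g v) * ((s.card : ℤ) - 1) := by
  by_cases hex : ∃ v₀ ∈ s, 1 < g v₀
  · obtain ⟨v₀, hv₀, hg⟩ := hex
    have hone : ∀ v ∈ s, v ≠ v₀ → g v = 1 := by
      intro v hv hne
      rcases lt_or_eq_of_le (h1 v hv) with hlt | heq
      · exact absurd (h2 v hv v₀ hv₀ hlt hg) hne
      · exact heq.symm
    have hprod : ∏ v ∈ s, g v = g v₀ :=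
      Finset.prod_eq_single v₀ (fun v hv hne => hone v hv hne) (fun h => absurd hv₀ h)
    have hsum : ∀ w ∈ s, ∏ v ∈ s.erase w, g v = if w = v₀ then 1 else g v₀ := by
      intro w hw
      by_cases hwv : w = v₀
      · subst hwv
        rw [if_pos rfl]
        exact Finset.prod_eq_one
          (fun v hv => hone v (Finset.mem_of_mem_erase hv) (Finset.ne_of_mem_erase hv))
      · rw [if_neg hwv]
        refine Finset.prod_eq_single v₀ ?_ ?_
        · intro v hv hne
          exact hone v (Finset.mem_of_mem_erase hv) hne
        · intro hnot
          exact absurd (Finset.mem_erase.2 ⟨Ne.symm hwv, hv₀⟩) hnot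
    rw [Finset.sum_congr rfl hsum, hprod, ← Finset.add_sum_erase _ _ hv₀, if_pos rfl]
    have hcongr : ∀ w ∈ s.erase v₀, (if w = v₀ then (1:ℤ) else g v₀) = g v₀ :=
      fun w hw => if_neg (Finset.ne_of_mem_erase hw)
    rw [Finset.sum_congr rfl hcongr, Finset.sum_const, Finset.card_erase_of_mem hv₀,
      nsmul_eq_mul]
    have hc : 1 ≤ s.card := Finset.card_pos.2 ⟨v₀, hv₀⟩
    rw [Nat.cast_sub hc]
    push_cast
    ring
  · push_neg at hex
    have hone : ∀ v ∈ s, g v = 1 := fun v hv => le_antisymm (hex v hv) (h1 v hv)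
    have hall : ∀ w ∈ s, ∏ v ∈ s.erase w, g v = 1 :=
      fun w _ => Finset.prod_eq_one (fun v hv => hone v (Finset.mem_of_mem_erase hv))
    rw [Finset.sum_congr rfl hall, Finset.sum_const, Finset.prod_congr rfl hone,
      Finset.prod_const_one, nsmul_eq_mul, mul_one, one_mul]
    ring

lemma key (T : DecTree) (v0 : T.C) (hroot : T.IsRoot v0) :
    ∀ n : ℕ, ∀ x x' : T.C, T.G.Adj x x' → T.lt v0 x x' → (T.Br x x').card ≤ n →
      ∑ y ∈ T.Br x x', (if T.isArrow y then T.phi x y else 0)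
        = 1 + ∑ y ∈ T.Br x x',
            (if ¬ T.isArrow y then T.phi x y * ((T.G.degree y : ℤ) - 2) else 0) := by
  intro n
  induction n with
  | zero =>
    intro x x' hadj hlt hcard
    have := Finset.card_pos.2 ⟨x', T.self_mem_Br x x'⟩
    omega
  | succ n ih =>
    intro x x' hadj hlt hcard
    obtain ⟨hxx', hxmem⟩ := hlt
    have hx'v0 : x' ≠ v0 := by
      intro h
      subst h
      rw [T.path_nil, SimpleGraph.Walk.support_nil, List.mem_singleton] at hxmem
      exact hxx' hxmem
    have hxrev : x ∈ (T.path x' v0).support := by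
      rw [← T.path_reverse v0 x', SimpleGraph.Walk.support_reverse, List.mem_reverse]
      exact hxmem
    have hconsv0 : T.path x' v0 = SimpleGraph.Walk.cons hadj.symm (T.path x v0) :=
      T.path_cons hadj.symm hxrev
    have hedges : ∀ w, T.G.Adj x' w → w ≠ x → s(x', w) ∉ (T.path v0 x').edges := by
      intro w hw hwx hmem
      rw [← T.path_reverse x' v0, SimpleGraph.Walk.edges_reverse, List.mem_reverse] at hmem
      rw [hconsv0, SimpleGraph.Walk.edges_cons, List.mem_cons] at hmem
      rcases hmem with hmem | hmem
      · rw [Sym2.eq_iff] at hmem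
        rcases hmem with ⟨_, h2⟩ | ⟨h1, _⟩
        · exact hwx h2
        · exact hadj.ne h1.symm
      · have : x' ∈ (T.path x v0).support :=
          SimpleGraph.Walk.fst_mem_support_of_mem_edges _ hmem
        exact T.not_mem_support_path_cons hadj.symm hxrev this
    set s := (T.G.neighborFinset x').erase x with hs
    have hwfacts : ∀ w ∈ s, T.G.Adj x' w ∧ w ≠ x ∧ T.lt v0 x' w := by
      intro w hwmem
      rw [hs, Finset.mem_erase, SimpleGraph.mem_neighborFinset] at hwmem
      obtain ⟨hwx, hw⟩ := hwmem
      refine ⟨hw, hwx, hw.ne, ?_⟩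
      have hwnot : w ∉ (T.path v0 x').support := by
        intro hmem
        have hmem' : w ∈ (T.path x' v0).support := by
          rw [← T.path_reverse v0 x', SimpleGraph.Walk.support_reverse, List.mem_reverse]
          exact hmem
        exact hwx (T.adj_support_unique hadj.symm hxrev hw hmem' hw.ne')
      have hWpath : ((T.path v0 x').append (SimpleGraph.Walk.cons hw SimpleGraph.Walk.nil)).IsPath := by
        rw [SimpleGraph.Walk.isPath_def, SimpleGraph.Walk.support_append]
        simp only [SimpleGraph.Walk.support_cons, SimpleGraph.Walk.support_nil, List.tail_cons]
        rw [List.nodup_append]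
        exact ⟨(T.path_isPath v0 x').support_nodup, List.nodup_singleton _, by simpa using fun a (ha : a ∈ (T.path v0 x').support) (haw : a = w) => hwnot (haw ▸ ha)⟩
      have hWeq : T.path v0 w
          = (T.path v0 x').append (SimpleGraph.Walk.cons hw SimpleGraph.Walk.nil) :=
        (T.path_unique _ hWpath).symm
      rw [hWeq, SimpleGraph.Walk.support_append]
      exact List.mem_append_left _ (T.path v0 x').end_mem_support
    have hrw : ∀ w ∈ s, ∀ y ∈ T.Br x' w,
        T.phi x y = (∏ v ∈ s.erase w, T.q x' v) * T.phi x' y := by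
      intro w hwmem y hy
      obtain ⟨hw, hwx, _⟩ := hwfacts w hwmem
      exact T.phi_cons hadj hw hwx (T.mem_Br.1 hy)
    have hL : ∀ w ∈ s, ∑ y ∈ T.Br x' w, (if T.isArrow y then T.phi x y else 0)
        = (∏ v ∈ s.erase w, T.q x' v)
            * ∑ y ∈ T.Br x' w, (if T.isArrow y then T.phi x' y else 0) := by
      intro w hwmem
      rw [Finset.mul_sum]
      refine Finset.sum_congr rfl fun y hy => ?_
      by_cases ha : T.isArrow y
      · rw [if_pos ha, if_pos ha, hrw w hwmem y hy]
      · rw [if_neg ha, if_neg ha, mul_zero]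
    have hR : ∀ w ∈ s,
        ∑ y ∈ T.Br x' w, (if ¬ T.isArrow y then T.phi x y * ((T.G.degree y : ℤ) - 2) else 0)
        = (∏ v ∈ s.erase w, T.q x' v)
            * ∑ y ∈ T.Br x' w,
                (if ¬ T.isArrow y then T.phi x' y * ((T.G.degree y : ℤ) - 2) else 0) := by
      intro w hwmem
      rw [Finset.mul_sum]
      refine Finset.sum_congr rfl fun y hy => ?_
      by_cases ha : T.isArrow y
      · rw [if_neg (not_not_intro ha), if_neg (not_not_intro ha), mul_zero]
      · rw [if_pos ha, if_pos ha, hrw w hwmem y hy]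
        ring
    have hIH : ∀ w ∈ s, ∑ y ∈ T.Br x' w, (if T.isArrow y then T.phi x' y else 0)
        = 1 + ∑ y ∈ T.Br x' w,
            (if ¬ T.isArrow y then T.phi x' y * ((T.G.degree y : ℤ) - 2) else 0) := by
      intro w hwmem
      obtain ⟨hw, hwx, hlt'⟩ := hwfacts w hwmem
      refine ih x' w hw hlt' ?_
      have hsub := Finset.card_le_card (T.Br_subset hadj hw hwx)
      rw [Finset.card_erase_of_mem (T.self_mem_Br x x')] at hsub
      omega
    rw [T.sum_Br hadj, T.sum_Br hadj, Finset.sum_congr rfl hL, Finset.sum_congr rfl hR]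
    have hLsum : ∀ w ∈ s, (∏ v ∈ s.erase w, T.q x' v)
          * ∑ y ∈ T.Br x' w, (if T.isArrow y then T.phi x' y else 0)
        = (∏ v ∈ s.erase w, T.q x' v)
          + (∏ v ∈ s.erase w, T.q x' v)
            * ∑ y ∈ T.Br x' w,
                (if ¬ T.isArrow y then T.phi x' y * ((T.G.degree y : ℤ) - 2) else 0) := by
      intro w hwmem
      rw [hIH w hwmem]
      ring
    rw [Finset.sum_congr rfl hLsum, Finset.sum_add_distrib, T.phi_self hadj, ← hs]
    have hgoal : (if T.isArrow x' then ∏ w ∈ s, T.q x' w else 0) + ∑ w ∈ s, ∏ v ∈ s.erase w, T.q x' v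
        = 1 + (if ¬ T.isArrow x' then (∏ w ∈ s, T.q x' w) * ((T.G.degree x' : ℤ) - 2) else 0) := by
      by_cases ha : T.isArrow x'
      · have hdeg := T.arrowValency x' ha
        have hc1 : (T.G.neighborFinset x').card = 1 := by
          rw [SimpleGraph.card_neighborFinset_eq_degree, hdeg]
        have hnb : T.G.neighborFinset x' = {x} := by
          obtain ⟨a, haeq⟩ := Finset.card_eq_one.1 hc1
          have hx : x ∈ T.G.neighborFinset x' := (SimpleGraph.mem_neighborFinset _ _ _).2 hadj.symm
          rw [haeq] at hx ⊢
          rw [Finset.mem_singleton] at hx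
          rw [hx]
        have hse : s = ∅ := by rw [hs, hnb, Finset.erase_singleton]
        rw [if_pos ha, if_neg (not_not_intro ha), hse]
        simp
      · have hxnb : x ∈ T.G.neighborFinset x' := (SimpleGraph.mem_neighborFinset _ _ _).2 hadj.symm
        have hdeg : (T.G.degree x' : ℤ) = (s.card : ℤ) + 1 := by
          have h1 : s.card = (T.G.neighborFinset x').card - 1 := by
            rw [hs, Finset.card_erase_of_mem hxnb]
          have h2 : 1 ≤ (T.G.neighborFinset x').card := Finset.card_pos.2 ⟨x, hxnb⟩
          rw [← SimpleGraph.card_neighborFinset_eq_degree]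
          omega
        obtain ⟨_, _, hroot3⟩ := hroot
        obtain ⟨hge, huniq⟩ := hroot3 x' ha hx'v0
        have hside1 : ∀ v ∈ s, 1 ≤ T.q x' v := by
          intro v hv
          obtain ⟨hw, hwx, _⟩ := hwfacts v hv
          exact hge v hw (hedges v hw hwx)
        have hside2 : ∀ v ∈ s, ∀ w ∈ s, 1 < T.q x' v → 1 < T.q x' w → v = w := by
          intro v hv w hw h1v h1w
          obtain ⟨hav, hvx, _⟩ := hwfacts v hv
          obtain ⟨haw, hwx2, _⟩ := hwfacts w hw
          exact huniq v w hav haw (hedges v hav hvx) (hedges w haw hwx2) h1v h1w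
        rw [if_neg ha, if_pos ha, zero_add, arith s (T.q x') hside1 hside2, hdeg]
        ring
    linarith [hgoal]

end DecTree

/-- For a decorated rooted tree with all arrow decorations in `{0,1}`, and an
out-pair `(x, e)` with `e = {x, x'}` and `x < x'`:
`p(x,e) = 1 + Σ_{y ∈ Y(x,e)} φ(x,y)·(δ_y - 2)`, where `Y(x,e)` is the set of
`y ∈ V ∪ A₀` such that `e` lies on the path from `x` to `y` (equivalently,
`x'` lies on that path), and `p(x,e) = Σ x̂_{x,α}` over arrows `α` with
`f(α) ≠ 0` such that `e` lies on the path from `x` to `α`. -/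
theorem stmt15 (T : DecTree) (v0 : T.C) (hroot : T.IsRoot v0)
    (hf : ∀ a, T.isArrow a → T.f a = 0 ∨ T.f a = 1)
    (x x' : T.C) (hadj : T.G.Adj x x') (hlt : T.lt v0 x x') :
    (∑ a ∈ Finset.univ.filter (fun a => T.isArrow a ∧ T.f a ≠ 0 ∧
        x' ∈ (T.path x a).support), T.xhat x a)
    = 1 + ∑ y ∈ Finset.univ.filter (fun y => (¬ T.isArrow y ∨ T.f y = 0) ∧
        x' ∈ (T.path x y).support),
        T.phi x y * ((T.G.degree y : ℤ) - 2) := by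
  have hkey := DecTree.key T v0 hroot (T.Br x x').card x x' hadj hlt le_rfl
  have hLset : Finset.univ.filter (fun a => T.isArrow a ∧ T.f a ≠ 0 ∧ x' ∈ (T.path x a).support)
      = (T.Br x x').filter (fun a => T.isArrow a ∧ T.f a ≠ 0) := by
    ext a
    simp only [Finset.mem_filter, Finset.mem_univ, true_and, DecTree.mem_Br]
    tauto
  have hRset : Finset.univ.filter (fun y => (¬ T.isArrow y ∨ T.f y = 0) ∧ x' ∈ (T.path x y).support)
      = (T.Br x x').filter (fun y => ¬ T.isArrow y ∨ T.f y = 0) := by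
    ext a
    simp only [Finset.mem_filter, Finset.mem_univ, true_and, DecTree.mem_Br]
    tauto
  rw [hLset, hRset, Finset.sum_filter, Finset.sum_filter]
  have hpt : ∀ y ∈ T.Br x x',
      (if T.isArrow y ∧ T.f y ≠ 0 then T.xhat x y else 0)
        + (if ¬ T.isArrow y then T.phi x y * ((T.G.degree y : ℤ) - 2) else 0)
      = (if T.isArrow y then T.phi x y else 0)
        + (if ¬ T.isArrow y ∨ T.f y = 0 then T.phi x y * ((T.G.degree y : ℤ) - 2) else 0) := by
    intro y _
    by_cases ha : T.isArrow y
    · have hxp : T.xhat x y = T.f y * T.phi x y := rfl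
      rcases hf y ha with h0 | h1
      · rw [if_neg (by simp [h0]), if_neg (not_not_intro ha), if_pos ha,
          if_pos (Or.inr h0), T.arrowValency y ha]
        push_cast
        ring
      · rw [if_pos ⟨ha, by simp [h1]⟩, if_neg (not_not_intro ha), if_pos ha,
          if_neg (by simp [ha, h1]), hxp, h1]
        ring
    · rw [if_neg (by simp [ha]), if_pos ha, if_neg ha, if_pos (Or.inl ha)]
  have hsum := Finset.sum_congr rfl hpt
  rw [Finset.sum_add_distrib, Finset.sum_add_distrib] at hsum
  linarith [hkey, hsum]
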